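/- Suppose all agents have opinions in $[1/2, 1]$ and $b_i \ge 1$. Then the biased assimilation update is nondecreasing for each agent: $x_i(k+1) \ge x_i(k)$ for every $i$. Moreover, the inequality is strict if some neighbor $j \in N_i$ has $x_j(k) > 1/2$ and $x_i(k) < 1$. -/

import Mathlib

open Finset Filter Topology

/-- Weighted sum of neighbors' opinions: `s_i = ∑_{j ∈ N_i} w_{ij} x_j`. -/
noncomputable def wsum {N : ℕ} (w : Fin N → Fin N → ℝ) (Nbr : Fin N → Finset (Fin N))
    (x : Fin N → ℝ) (i : Fin N) : ℝ :=
  ∑ j ∈ Nbr i, w i j * x j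

/-- Weighted degree `d_i = ∑_{j ∈ N_i} w_{ij}`. -/
noncomputable def degw {N : ℕ} (w : Fin N → Fin N → ℝ) (Nbr : Fin N → Finset (Fin N))
    (i : Fin N) : ℝ :=
  ∑ j ∈ Nbr i, w i j

/-- Biased assimilation update map (componentwise). Powers are real powers. -/
noncomputable def F {N : ℕ} (w : Fin N → Fin N → ℝ) (Nbr : Fin N → Finset (Fin N))
    (b : Fin N → ℝ) (x : Fin N → ℝ) (i : Fin N) : ℝ :=
  (w i i * x i + x i ^ b i * wsum w Nbr x i) /
    (w i i + x i ^ b i * wsum w Nbr x i + (1 - x i) ^ b i * (degw w Nbr i - wsum w Nbr x i))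

/-- The directed influence graph (edge `j → i` iff `j ∈ Nbr i`) is strongly connected. -/
def StronglyConnected {N : ℕ} (Nbr : Fin N → Finset (Fin N)) : Prop :=
  ∀ i j : Fin N, Relation.TransGen (fun a c => a ∈ Nbr c) i j

/-- Lyapunov stability of a fixed point of the discrete-time system `x⁺ = G x`. -/
def LyapStable {E : Type*} [NormedAddCommGroup E] (G : E → E) (q : E) : Prop :=
  ∀ ε > 0, ∃ δ > 0, ∀ x, ‖x - q‖ < δ → ∀ k : ℕ, ‖G^[k] x - q‖ < ε

/-- Local exponential stability of a fixed point of `x⁺ = G x`. -/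
def LocExpStable {E : Type*} [NormedAddCommGroup E] (G : E → E) (q : E) : Prop :=
  ∃ δ > 0, ∃ C > 0, ∃ r, 0 ≤ r ∧ r < 1 ∧
    ∀ x, ‖x - q‖ ≤ δ → ∀ k : ℕ, ‖G^[k] x - q‖ ≤ C * r ^ k * ‖x - q‖

/-- Spectral radius of a real square matrix: supremum of moduli of its complex eigenvalues. -/
noncomputable def specRad {n : ℕ} (M : Matrix (Fin n) (Fin n) ℝ) : ℝ :=
  sSup {r : ℝ | ∃ μ : ℂ, (M.map (fun a => (a : ℂ))).charpoly.IsRoot μ ∧ r = ‖μ‖}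


private lemma key_ineq (x b : ℝ) (h1 : 1/2 ≤ x) (h2 : x ≤ 1) (hb : 1 ≤ b) :
    (1 - x) ^ b * x ≤ x ^ b * (1 - x) := by
  rcases eq_or_lt_of_le h2 with h | h
  · rw [← h]
    simp [Real.zero_rpow (by linarith : b ≠ 0)]
  · have hx0 : (0:ℝ) < x := by linarith
    have hy0 : (0:ℝ) < 1 - x := by linarith
    have e1 : x ^ b = x ^ (b - 1) * x := by
      rw [show b = (b - 1) + 1 by ring, Real.rpow_add hx0, Real.rpow_one]; ring_nf
    have e2 : (1 - x) ^ b = (1 - x) ^ (b - 1) * (1 - x) := by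
      rw [show b = (b - 1) + 1 by ring, Real.rpow_add hy0, Real.rpow_one]; ring_nf
    have hmono : (1 - x) ^ (b - 1) ≤ x ^ (b - 1) :=
      Real.rpow_le_rpow (by linarith) (by linarith) (by linarith)
    rw [e1, e2]
    nlinarith [mul_le_mul_of_nonneg_right hmono (mul_pos hx0 hy0).le]

theorem stmt10 {N : ℕ} (w : Fin N → Fin N → ℝ) (Nbr : Fin N → Finset (Fin N)) (b : Fin N → ℝ)
    (hne : ∀ i, (Nbr i).Nonempty)
    (hw : ∀ i, ∀ j ∈ Nbr i, 0 < w i j) (hwii : ∀ i, 0 ≤ w i i) (hb : ∀ i, 1 ≤ b i)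
    (x : Fin N → ℝ) (hx : ∀ j, x j ∈ Set.Icc (1/2 : ℝ) 1) :
    (∀ i, x i ≤ F w Nbr b x i) ∧
    (∀ i, (∃ j ∈ Nbr i, 1/2 < x j) → x i < 1 → x i < F w Nbr b x i) := by
  have H : ∀ i : Fin N,
      0 < w i i + x i ^ b i * wsum w Nbr x i +
        (1 - x i) ^ b i * (degw w Nbr i - wsum w Nbr x i) ∧
      x i * (w i i + x i ^ b i * wsum w Nbr x i +
        (1 - x i) ^ b i * (degw w Nbr i - wsum w Nbr x i))
        ≤ w i i * x i + x i ^ b i * wsum w Nbr x i ∧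
      ((∃ j ∈ Nbr i, 1/2 < x j) → x i < 1 →
        x i * (w i i + x i ^ b i * wsum w Nbr x i +
          (1 - x i) ^ b i * (degw w Nbr i - wsum w Nbr x i))
          < w i i * x i + x i ^ b i * wsum w Nbr x i) := by
    intro i
    obtain ⟨hx1, hx2⟩ := hx i
    have hxpos : 0 < x i := by linarith
    have ha : 0 < x i ^ b i := Real.rpow_pos_of_pos hxpos _
    have hc : 0 ≤ (1 - x i) ^ b i := Real.rpow_nonneg (by linarith) _
    have hdiff : degw w Nbr i - wsum w Nbr x i = ∑ j ∈ Nbr i, w i j * (1 - x j) := by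
      rw [degw, wsum, ← Finset.sum_sub_distrib]
      exact Finset.sum_congr rfl fun j _ => by ring
    have hds0 : 0 ≤ degw w Nbr i - wsum w Nbr x i := by
      rw [hdiff]
      exact Finset.sum_nonneg fun j hj =>
        mul_nonneg (hw i j hj).le (by linarith [(hx j).2])
    have hsum2 : wsum w Nbr x i - (degw w Nbr i - wsum w Nbr x i)
        = ∑ j ∈ Nbr i, w i j * (2 * x j - 1) := by
      rw [hdiff, wsum, ← Finset.sum_sub_distrib]
      exact Finset.sum_congr rfl fun j _ => by ring
    have hss : degw w Nbr i - wsum w Nbr x i ≤ wsum w Nbr x i := by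
      have h0 : 0 ≤ ∑ j ∈ Nbr i, w i j * (2 * x j - 1) :=
        Finset.sum_nonneg fun j hj =>
          mul_nonneg (hw i j hj).le (by linarith [(hx j).1])
      linarith [hsum2 ▸ h0]
    have hspos : 0 < wsum w Nbr x i := by
      rw [wsum]
      exact Finset.sum_pos (fun j hj => mul_pos (hw i j hj)
        (by linarith [(hx j).1])) (hne i)
    have hkey : (1 - x i) ^ b i * x i ≤ x i ^ b i * (1 - x i) :=
      key_ineq (x i) (b i) hx1 hx2 (hb i)
    have hD : 0 < w i i + x i ^ b i * wsum w Nbr x i +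
        (1 - x i) ^ b i * (degw w Nbr i - wsum w Nbr x i) := by
      have := hwii i
      nlinarith [mul_pos ha hspos, mul_nonneg hc hds0]
    refine ⟨hD, ?_, ?_⟩
    · nlinarith [mul_le_mul_of_nonneg_right hkey hds0,
        mul_le_mul_of_nonneg_left hss (mul_nonneg ha.le (by linarith : (0:ℝ) ≤ 1 - x i))]
    · rintro ⟨j, hj, hxj⟩ hxi1
      have hstrict : degw w Nbr i - wsum w Nbr x i < wsum w Nbr x i := by
        have h0 : 0 < ∑ j ∈ Nbr i, w i j * (2 * x j - 1) :=
          Finset.sum_pos' (fun k hk => mul_nonneg (hw i k hk).le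
            (by linarith [(hx k).1]))
            ⟨j, hj, mul_pos (hw i j hj) (by linarith)⟩
        linarith [hsum2 ▸ h0]
      have hpos : 0 < x i ^ b i * (1 - x i) :=
        mul_pos ha (by linarith)
      nlinarith [mul_le_mul_of_nonneg_right hkey hds0,
        mul_lt_mul_of_pos_left hstrict hpos]
  refine ⟨fun i => ?_, fun i hj hxi1 => ?_⟩
  · obtain ⟨hD, hle, _⟩ := H i
    rw [F, le_div_iff₀ hD]
    exact hle
  · obtain ⟨hD, _, hlt⟩ := H i
    rw [F, lt_div_iff₀ hD]
    exact hlt hj hxi1
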